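/- The function z ↦ z/(e^z - 1), extended by the value 1 at z = 0, is convex on (0, ∞). -/

import Mathlib

open Real Set

private lemma aux_h' (x : ℝ) : 0 ≤ (x - 1) * Real.exp x + 1 := by
  have h := Real.add_one_le_exp (-x)
  have hpos := Real.exp_pos x
  have hinv : Real.exp (-x) = (Real.exp x)⁻¹ := Real.exp_neg x
  rw [hinv] at h
  nlinarith [mul_le_mul_of_nonneg_right h hpos.le, mul_inv_cancel₀ (ne_of_gt hpos)]

private lemma aux_h (x : ℝ) (hx : 0 ≤ x) : 0 ≤ (x - 2) * Real.exp x + x + 2 := by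
  set h : ℝ → ℝ := fun y => (y - 2) * Real.exp y + y + 2 with hh
  have hderiv : ∀ y : ℝ, HasDerivAt h ((y - 1) * Real.exp y + 1) y := by
    intro y
    have h1 : HasDerivAt (fun y : ℝ => (y - 2) * Real.exp y)
        (1 * Real.exp y + (y - 2) * Real.exp y) y :=
      ((hasDerivAt_id' y).sub_const 2).mul (Real.hasDerivAt_exp y)
    have h2 := (h1.add (hasDerivAt_id' y)).add_const 2
    exact h2.congr_deriv (by ring)
  have hmono : MonotoneOn h (Set.Ici 0) := by
    apply monotoneOn_of_deriv_nonneg (convex_Ici 0)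
    · exact Continuous.continuousOn (by continuity)
    · intro y _
      exact (hderiv y).differentiableAt.differentiableWithinAt
    · intro y _
      rw [(hderiv y).deriv]
      exact aux_h' y
  have h0 : h 0 = 0 := by simp [hh]
  have := hmono (Set.self_mem_Ici) hx hx
  rw [h0] at this
  simpa [hh] using this

theorem z_div_exp_sub_one_convex :
    ConvexOn ℝ (Set.Ioi (0 : ℝ)) (fun z : ℝ => z / (Real.exp z - 1)) := by
  set f : ℝ → ℝ := fun z => z / (Real.exp z - 1) with hf
  set f1 : ℝ → ℝ := fun z => ((Real.exp z - 1) - z * Real.exp z) / (Real.exp z - 1) ^ 2 with hf1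
  set f2 : ℝ → ℝ := fun z => Real.exp z * ((z - 2) * Real.exp z + z + 2) / (Real.exp z - 1) ^ 3
    with hf2
  have hne : ∀ x : ℝ, x ∈ Set.Ioi (0:ℝ) → Real.exp x - 1 ≠ 0 := by
    intro x hx
    have h := Real.add_one_le_exp x
    have hx' : (0:ℝ) < x := hx
    nlinarith
  have hne' : ∀ x : ℝ, x ∈ Set.Ioi (0:ℝ) → 0 < Real.exp x - 1 := by
    intro x hx
    have h := Real.add_one_le_exp x
    have hx' : (0:ℝ) < x := hx
    nlinarith
  have hd1 : ∀ x ∈ Set.Ioi (0:ℝ), HasDerivAt f (f1 x) x := by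
    intro x hx
    have hdiv : HasDerivAt f
        ((1 * (Real.exp x - 1) - x * Real.exp x) / (Real.exp x - 1) ^ 2) x :=
      (hasDerivAt_id x).div ((Real.hasDerivAt_exp x).sub_const 1) (hne x hx)
    convert hdiv using 1
    rw [hf1]; ring_nf
  have hd2 : ∀ x ∈ Set.Ioi (0:ℝ), HasDerivAt f1 (f2 x) x := by
    intro x hx
    have hnum : HasDerivAt (fun z : ℝ => (Real.exp z - 1) - z * Real.exp z)
        (Real.exp x - (1 * Real.exp x + x * Real.exp x)) x :=
      ((Real.hasDerivAt_exp x).sub_const 1).sub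
        ((hasDerivAt_id x).mul (Real.hasDerivAt_exp x))
    have hden : HasDerivAt (fun z : ℝ => (Real.exp z - 1) ^ 2)
        (2 * (Real.exp x - 1) ^ 1 * Real.exp x) x := by
      exact (HasDerivAt.fun_pow ((Real.hasDerivAt_exp x).sub_const 1) 2).congr_deriv (by norm_num)
    have hden_ne : ((Real.exp x - 1) ^ 2 : ℝ) ≠ 0 := pow_ne_zero 2 (hne x hx)
    have hdiv := hnum.div hden hden_ne
    refine hdiv.congr_deriv ?_
    rw [hf2]
    have hn := hne x hx
    field_simp
    ring
  -- deriv f = f1 on Ioi 0 (as eventual equality near each point)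
  have hderiv_eq : ∀ x ∈ Set.Ioi (0:ℝ), deriv f x = f1 x := fun x hx => (hd1 x hx).deriv
  have hderiv2_eq : ∀ x ∈ Set.Ioi (0:ℝ), deriv (deriv f) x = f2 x := by
    intro x hx
    have hev : deriv f =ᶠ[nhds x] f1 := by
      filter_upwards [IsOpen.mem_nhds isOpen_Ioi hx] with y hy using hderiv_eq y hy
    rw [Filter.EventuallyEq.deriv_eq hev]
    exact (hd2 x hx).deriv
  apply convexOn_of_deriv2_nonneg (convex_Ioi 0)
  · intro x hx
    exact ((hd1 x hx).continuousAt).continuousWithinAt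
  · intro x hx
    rw [interior_Ioi] at hx
    exact (hd1 x hx).differentiableAt.differentiableWithinAt
  · intro x hx
    rw [interior_Ioi] at hx
    have hev : deriv f =ᶠ[nhds x] f1 := by
      filter_upwards [IsOpen.mem_nhds isOpen_Ioi hx] with y hy using hderiv_eq y hy
    exact ((hd2 x hx).differentiableAt.congr_of_eventuallyEq hev).differentiableWithinAt
  · intro x hx
    rw [interior_Ioi] at hx
    have : deriv^[2] f x = deriv (deriv f) x := by
      simp [Function.iterate_succ, Function.iterate_one]
    rw [this, hderiv2_eq x hx, hf2]
    apply div_nonneg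
    · exact mul_nonneg (Real.exp_pos x).le (aux_h x (le_of_lt hx))
    · exact pow_nonneg (hne' x hx).le 3
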